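/- Let 0<q<p be coprime integers with p/q=[a_1,...,a_n], a_i≥2, and let A be the associated tridiagonal matrix with diagonal -a_i and off-diagonals 1. Let A_1 be A with its first column replaced by the vector w=(a_1-2,...,a_n-2)^T. Then det A_1 = (-1)^{n+1}(p - q - 1). -/

import Mathlib

/-- Hirzebruch–Jung (negative-regular) continued fraction
`[a₁,...,aₙ] = a₁ - 1/(a₂ - 1/(⋯ - 1/aₙ))`. -/
def hjCF : List ℚ → ℚ
  | [] => 0
  | [a] => a
  | a :: b :: l => a - 1 / hjCF (b :: l)

/-- The tridiagonal matrix with diagonal `-a₁,...,-aₙ` and off-diagonal entries `1`. -/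
def tridiag {n : ℕ} (a : Fin n → ℤ) : Matrix (Fin n) (Fin n) ℚ :=
  Matrix.of fun i j =>
    if i = j then -(a i : ℚ)
    else if (i : ℕ) + 1 = (j : ℕ) ∨ (j : ℕ) + 1 = (i : ℕ) then 1 else 0


def cont : List ℤ → ℤ × ℤ
  | [] => (1, 0)
  | a :: l => (a * (cont l).1 - (cont l).2, (cont l).1)

lemma cont_pos : ∀ (l : List ℤ), (∀ x ∈ l, 2 ≤ x) → (cont l).2 < (cont l).1 ∧ 0 ≤ (cont l).2
  | [], _ => by simp [cont]
  | a :: l, h => by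
    have ih := cont_pos l (fun x hx => h x (List.mem_cons_of_mem _ hx))
    have ha : 2 ≤ a := h a List.mem_cons_self
    simp only [cont]
    constructor
    · nlinarith [ih.1, ih.2]
    · omega

lemma cont_gcd : ∀ (l : List ℤ), Int.gcd (cont l).1 (cont l).2 = 1
  | [] => by simp [cont]
  | a :: l => by
    have ih := cont_gcd l
    rw [← Int.isCoprime_iff_gcd_eq_one] at ih ⊢
    simp only [cont]
    have : a * (cont l).1 - (cont l).2 = -(cont l).2 + a * (cont l).1 := by ring
    rw [this]
    exact (ih.symm.neg_left.add_mul_right_left a).symm.symm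
  -- may need fixing

lemma cont_snd_pos : ∀ (l : List ℤ), l ≠ [] → (∀ x ∈ l, 2 ≤ x) → 0 < (cont l).2
  | [], h, _ => absurd rfl h
  | a :: l, _, h => by
    have := cont_pos l (fun x hx => h x (List.mem_cons_of_mem _ hx))
    simp only [cont]
    omega

lemma hjCF_cont : ∀ (l : List ℤ), l ≠ [] → (∀ x ∈ l, 2 ≤ x) →
    hjCF (l.map (Int.cast : ℤ → ℚ)) = (cont l).1 / (cont l).2
  | [], h, _ => absurd rfl h
  | [a], _, h => by simp [hjCF, cont]
  | a :: b :: l, _, h => by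
    have ih := hjCF_cont (b :: l) (by simp) (fun x hx => h x (List.mem_cons_of_mem _ hx))
    have hp := cont_pos (b :: l) (fun x hx => h x (List.mem_cons_of_mem _ hx))
    have h1 : (0:ℤ) < (cont (b :: l)).1 := lt_of_le_of_lt hp.2 hp.1
    have h2 : (0:ℤ) < (cont (b :: l)).2 := by
      have := cont_pos l (fun x hx => h x (List.mem_cons_of_mem _ (List.mem_cons_of_mem _ hx)))
      simp only [cont]
      omega
    have e1 : ((cont (b :: l)).1 : ℚ) ≠ 0 := by exact_mod_cast h1.ne'
    have e2 : ((cont (b :: l)).2 : ℚ) ≠ 0 := by exact_mod_cast h2.ne'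
    have step : ((a :: b :: l).map (Int.cast : ℤ → ℚ)) =
        (a : ℚ) :: ((b :: l).map (Int.cast : ℤ → ℚ)) := rfl
    rw [step]
    have step2 : ∀ (x : ℚ) (y : ℚ) (L : List ℚ), hjCF (x :: y :: L) = x - 1 / hjCF (y :: L) :=
      fun x y L => rfl
    have step3 : ((b :: l).map (Int.cast : ℤ → ℚ)) = (b : ℚ) :: (l.map (Int.cast : ℤ → ℚ)) := rfl
    rw [step3] at ih
    rw [step3, step2, ih]
    show (a:ℚ) - 1 / _ = ((cont (a :: b :: l)).1 : ℚ) / ((cont (a :: b :: l)).2 : ℚ)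
    have key : (cont (a :: b :: l)).1 = a * (cont (b::l)).1 - (cont (b::l)).2 := rfl
    have key2 : (cont (a :: b :: l)).2 = (cont (b::l)).1 := rfl
    rw [key, key2]
    push_cast
    field_simp


open Matrix

lemma tridiag_submatrix {n : ℕ} (a : Fin (n + 1) → ℤ) :
    (tridiag a).submatrix Fin.succ Fin.succ = tridiag (a ∘ Fin.succ) := by
  ext i j
  simp only [tridiag, submatrix_apply, of_apply, Function.comp_apply, Fin.succ_inj, Fin.val_succ]
  have : ((i : ℕ) + 1 + 1 = (j : ℕ) + 1 ∨ (j : ℕ) + 1 + 1 = (i : ℕ) + 1)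
      ↔ ((i : ℕ) + 1 = (j : ℕ) ∨ (j : ℕ) + 1 = (i : ℕ)) := by omega
  simp only [this]

lemma update_submatrix {n : ℕ} (a : Fin (n + 1) → ℤ) (c : Fin (n + 1) → ℚ) :
    ((tridiag a).updateCol 0 c).submatrix Fin.succ Fin.succ = tridiag (a ∘ Fin.succ) := by
  rw [← tridiag_submatrix]
  ext i j
  simp only [submatrix_apply]
  exact Matrix.updateCol_ne (Fin.succ_ne_zero j)

lemma update_submatrix_one {n : ℕ} (a : Fin (n + 2) → ℤ) (c : Fin (n + 2) → ℚ) :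
    ((tridiag a).updateCol 0 c).submatrix Fin.succ ((1 : Fin (n + 2)).succAbove)
      = (tridiag (a ∘ Fin.succ)).updateCol 0 (fun i => c i.succ) := by
  ext i j
  refine Fin.cases ?_ (fun k => ?_) j
  · have h0 : (1 : Fin (n + 2)).succAbove 0 = 0 := rfl
    simp only [submatrix_apply, h0, Matrix.updateCol_self]
  · have hk : (1 : Fin (n + 2)).succAbove k.succ = k.succ.succ :=
      Fin.succAbove_of_le_castSucc _ _ (by
        rw [Fin.le_castSucc_iff]
        exact Fin.one_lt_succ_succ k)
    simp only [submatrix_apply, hk]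
    rw [Matrix.updateCol_ne (Fin.succ_ne_zero _), Matrix.updateCol_ne (Fin.succ_ne_zero _)]
    have := congrFun (congrFun (tridiag_submatrix a) i) k.succ
    simpa [submatrix_apply] using this

lemma det_update_key {n : ℕ} (a : Fin (n + 2) → ℤ) (c : Fin (n + 2) → ℚ) :
    ((tridiag a).updateCol 0 c).det
      = c 0 * (tridiag (a ∘ Fin.succ)).det
        - ((tridiag (a ∘ Fin.succ)).updateCol 0 (fun i => c i.succ)).det := by
  rw [Matrix.det_succ_row_zero, Fin.sum_univ_succ, Fin.sum_univ_succ]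
  have hz : ∀ j : Fin n, ((tridiag a).updateCol 0 c) 0 j.succ.succ = 0 := by
    intro j
    rw [Matrix.updateCol_ne (Fin.succ_ne_zero _)]
    have h1 : (0 : Fin (n+2)) ≠ j.succ.succ := (Fin.succ_ne_zero _).symm
    simp only [tridiag, of_apply, if_neg h1, Fin.val_succ, Fin.val_zero]
    have : ¬((0:ℕ) + 1 = (j:ℕ) + 1 + 1 ∨ (j:ℕ) + 1 + 1 + 1 = 0) := by omega
    exact if_neg this
  have hsum : ∀ j : Fin n, (-1 : ℚ) ^ ((j.succ.succ : Fin (n+2)) : ℕ) *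
      ((tridiag a).updateCol 0 c) 0 j.succ.succ *
      (((tridiag a).updateCol 0 c).submatrix Fin.succ (j.succ.succ).succAbove).det = 0 := by
    intro j; rw [hz]; ring
  rw [Finset.sum_congr rfl (fun j _ => hsum j), Finset.sum_const_zero]
  have h01 : ((tridiag a).updateCol 0 c) 0 0 = c 0 := Matrix.updateCol_self
  have h02 : ((tridiag a).updateCol 0 c) 0 1 = 1 := by
    rw [Matrix.updateCol_ne (one_ne_zero)]
    simp only [tridiag, of_apply]
    rw [if_neg (by simp : (0 : Fin (n+2)) ≠ 1)]
    rw [if_pos (by simp)]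
  have hsub0 : (0 : Fin (n+2)).succAbove = Fin.succ := Fin.succAbove_zero
  simp only [Fin.succ_zero_eq_one]
  rw [h01, h02, hsub0, update_submatrix, update_submatrix_one]
  simp only [Fin.val_zero, pow_zero, Fin.val_one, pow_one]
  ring

lemma det_update_single {n : ℕ} (a : Fin (n + 1) → ℤ) :
    ((tridiag a).updateCol 0 (Pi.single 0 1)).det = (tridiag (a ∘ Fin.succ)).det := by
  rw [Matrix.det_succ_column_zero, Fin.sum_univ_succ]
  have hz : ∀ i : Fin n, ((tridiag a).updateCol 0 (Pi.single 0 1)) i.succ 0 = 0 := by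
    intro i
    rw [Matrix.updateCol_self]
    exact Pi.single_eq_of_ne (Fin.succ_ne_zero i) 1
  have hsum : ∀ i : Fin n, (-1 : ℚ) ^ ((i.succ : Fin (n+1)) : ℕ) *
      ((tridiag a).updateCol 0 (Pi.single 0 1)) i.succ 0 *
      (((tridiag a).updateCol 0 (Pi.single 0 1)).submatrix (i.succ).succAbove Fin.succ).det = 0 := by
    intro i; rw [hz]; ring
  rw [Finset.sum_congr rfl (fun i _ => hsum i), Finset.sum_const_zero, add_zero]
  have h00 : ((tridiag a).updateCol 0 (Pi.single 0 1)) 0 0 = 1 := by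
    rw [Matrix.updateCol_self]; simp
  rw [h00, Fin.succAbove_zero]
  have hsub : ((tridiag a).updateCol 0 (Pi.single 0 1)).submatrix Fin.succ Fin.succ
      = tridiag (a ∘ Fin.succ) := update_submatrix a _
  rw [hsub]
  simp

lemma tridiag_col0 {n : ℕ} (a : Fin (n + 2) → ℤ) :
    (fun i : Fin (n + 1) => tridiag a i.succ 0) = Pi.single 0 1 := by
  funext i
  refine Fin.cases ?_ (fun k => ?_) i
  · have h1 : (Fin.succ 0 : Fin (n+2)) ≠ 0 := Fin.succ_ne_zero _
    simp only [tridiag, of_apply, if_neg h1]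
    rw [if_pos]
    · simp
    · right; simp
  · have h1 : (k.succ.succ : Fin (n+2)) ≠ 0 := Fin.succ_ne_zero _
    simp only [tridiag, of_apply, if_neg h1, Fin.val_succ, Fin.val_zero]
    rw [Pi.single_eq_of_ne (Fin.succ_ne_zero k)]
    exact if_neg (by omega)

lemma tridiag_00 {n : ℕ} (a : Fin (n + 1) → ℤ) : tridiag a 0 0 = -(a 0 : ℚ) := by
  simp [tridiag]

lemma det_tridiag : ∀ (n : ℕ) (a : Fin n → ℤ),
    (tridiag a).det = (-1 : ℚ) ^ n * ((cont (List.ofFn a)).1 : ℚ)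
  | 0, a => by simp [cont]
  | 1, a => by
    rw [Matrix.det_fin_one, tridiag_00]
    simp [List.ofFn_succ, cont]
  | (n + 2), a => by
    have ih1 := det_tridiag (n + 1) (a ∘ Fin.succ)
    have ih0 := det_tridiag n (a ∘ Fin.succ ∘ Fin.succ)
    rw [← Matrix.updateCol_eq_self (tridiag a) 0, det_update_key, tridiag_col0,
      det_update_single, tridiag_00, ih1]
    have : (a ∘ Fin.succ) ∘ Fin.succ = a ∘ Fin.succ ∘ Fin.succ := rfl
    rw [this, ih0]
    have e1 : List.ofFn a = a 0 :: List.ofFn (a ∘ Fin.succ) := List.ofFn_succ (f := a)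
    have e2 : List.ofFn (a ∘ Fin.succ) = a 1 :: List.ofFn (a ∘ Fin.succ ∘ Fin.succ) := by
      rw [List.ofFn_succ]; rfl
    rw [e1, e2]
    simp only [cont]
    push_cast
    ring

lemma det_D : ∀ (n : ℕ) (a : Fin (n + 1) → ℤ),
    ((tridiag a).updateCol 0 (fun i => (a i : ℚ) - 2)).det
      = (-1 : ℚ) ^ n * (((cont (List.ofFn a)).1 : ℚ) - ((cont (List.ofFn a)).2 : ℚ) - 1)
  | 0, a => by
    rw [Matrix.det_fin_one, Matrix.updateCol_self]
    simp [List.ofFn_succ, cont]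
    ring
  | (n + 1), a => by
    have ih := det_D n (a ∘ Fin.succ)
    rw [det_update_key, det_tridiag]
    have : (fun i : Fin (n+1) => ((a i.succ : ℚ)) - 2) = (fun i => ((a ∘ Fin.succ) i : ℚ) - 2) := rfl
    rw [this, ih]
    have e1 : List.ofFn a = a 0 :: List.ofFn (a ∘ Fin.succ) := List.ofFn_succ (f := a)
    rw [e1]
    simp only [cont]
    push_cast
    ring

theorem det_tridiag_first_col_replaced (p q : ℤ) (hq : 0 < q) (hqp : q < p)
    (hcop : Int.gcd p q = 1)
    (n : ℕ) (hn : 0 < n) (a : Fin n → ℤ) (ha : ∀ i, 2 ≤ a i)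
    (hhj : hjCF (List.ofFn fun i => ((a i : ℚ))) = (p : ℚ) / q) :
    ((tridiag a).updateCol ⟨0, hn⟩ (fun i => (a i : ℚ) - 2)).det
      = (-1 : ℚ) ^ (n + 1) * (p - q - 1) := by
  obtain ⟨m, rfl⟩ : ∃ m, n = m + 1 := ⟨n - 1, by omega⟩
  have h0 : (⟨0, hn⟩ : Fin (m + 1)) = 0 := by
    apply Fin.ext; simp
  rw [h0, det_D]
  set l := List.ofFn a with hl
  have hmem : ∀ x ∈ l, 2 ≤ x := by
    intro x hx
    rw [hl, List.mem_ofFn] at hx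
    obtain ⟨i, rfl⟩ := hx
    exact ha i
  have hne : l ≠ [] := by
    rw [hl, List.ofFn_succ]
    simp
  have hcf := hjCF_cont l hne hmem
  have hmap : l.map (Int.cast : ℤ → ℚ) = List.ofFn (fun i => ((a i : ℚ))) := by
    simp only [hl, List.map_ofFn]
    rfl
  rw [hmap, hhj] at hcf
  have hp2 := cont_pos l hmem
  have h2pos : 0 < (cont l).2 := cont_snd_pos l hne hmem
  have h1pos : 0 < (cont l).1 := lt_of_le_of_lt hp2.2 hp2.1
  have hq0 : (q:ℚ) ≠ 0 := by exact_mod_cast hq.ne'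
  have hK2 : ((cont l).2 : ℚ) ≠ 0 := by exact_mod_cast h2pos.ne'
  have hcross : p * (cont l).2 = (cont l).1 * q := by
    have h := (div_eq_div_iff hq0 hK2).mp hcf
    exact_mod_cast h
  have hgcdK := cont_gcd l
  have hqd : q ∣ (cont l).2 := by
    have h1 : q ∣ p * (cont l).2 := ⟨(cont l).1, by linarith⟩
    exact Int.dvd_of_dvd_mul_right_of_gcd_one h1 (by rw [Int.gcd_comm]; exact hcop)
  have hKd : (cont l).2 ∣ q := by
    have h1 : (cont l).2 ∣ (cont l).1 * q := ⟨p, by linarith⟩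
    exact Int.dvd_of_dvd_mul_right_of_gcd_one h1 (by rw [Int.gcd_comm]; exact hgcdK)
  have hqK : q = (cont l).2 := Int.dvd_antisymm hq.le h2pos.le hqd hKd
  have hpK : p = (cont l).1 := by
    have : p * (cont l).2 = (cont l).1 * (cont l).2 := by rw [hcross, hqK]
    exact mul_right_cancel₀ h2pos.ne' this
  rw [← hqK, ← hpK]
  rw [pow_succ, pow_succ]
  ring
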